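/- Let u ≥ 0 be a real number, let i ≥ 3 be an integer with (i+1)·u < 1, and set γₘ := m·u/(1−m·u). Let α, ĉ_prev, c_prev, and for m = 1,…,i−2 real numbers tₘ (representing h_{i−m,i}·βᵢ⋯β_{i−m+1}) together with exact coefficients dₘ and computed coefficients d̂ₘ, and a real number w (representing h_{1i}·βᵢ⋯β₂) be given; define e_prev := ĉ_prev − c_prev and eₘ := d̂ₘ − dₘ. Suppose the exact value is c = −α·c_prev − Σ_{m=1}^{i−2} tₘ·dₘ − w, and the computed value ĉ satisfies −(1+ε)·ĉ = α·ĉ_prev·(1+δ) + t₁·d̂₁·(1+θᵢ) + Σ_{m=2}^{i−2} tₘ·d̂ₘ·(1+θ_{i+1}⁽ᵐ⁾) + w·(1+θ̂ᵢ), where |δ| ≤ u, |ε| ≤ u, |θᵢ| ≤ γᵢ, |θ̂ᵢ| ≤ γᵢ, and |θ_{i+1}⁽ᵐ⁾| ≤ γ_{i+1} for each m. Then the error e := ĉ − c satisfies |e| ≤ |α·e_prev| + Σ_{m=1}^{i−2} |tₘ·eₘ| + γ_{i+1}·Σ_{m=2}^{i−2} |tₘ·d̂ₘ| + γᵢ·(|t₁·d̂₁|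 + |w|) + u·(|ĉ| + |α·ĉ_prev|). -/

import Mathlib

/-- Theorem 5.3 (case j = i) of the paper: error bound for the leading new
coefficient of the characteristic polynomial of a Hessenberg matrix,
`ĉᵢ⁽ⁱ⁾ = −fl[fl[αᵢ ĉᵢ₋₁⁽ⁱ⁻¹⁾] + fl[Σₘ tₘ ĉ_{i−m−1}⁽ⁱ⁻ᵐ⁻¹⁾ + w]]`,
where `tₘ = h_{i−m,i} βᵢ⋯β_{i−m+1}` and `w = h_{1i} βᵢ⋯β₂`. -/
theorem stmt_9 (u : ℝ) (hu : 0 ≤ u) (i : ℕ) (hi : 3 ≤ i)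
    (hiu : ((i : ℝ) + 1) * u < 1)
    (α chatprev cprev w chat c δ ε θi θi' : ℝ)
    (t d dhat θ' : ℕ → ℝ)
    (hδ : |δ| ≤ u) (hε : |ε| ≤ u)
    (hθi : |θi| ≤ (i : ℝ) * u / (1 - (i : ℝ) * u))
    (hθi' : |θi'| ≤ (i : ℝ) * u / (1 - (i : ℝ) * u))
    (hθ' : ∀ m ∈ Finset.Icc 2 (i - 2),
      |θ' m| ≤ ((i : ℝ) + 1) * u / (1 - ((i : ℝ) + 1) * u))
    (hexact : c = -(α * cprev) - (∑ m ∈ Finset.Icc 1 (i - 2), t m * d m) - w)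
    (hcomp : -((1 + ε) * chat) = α * chatprev * (1 + δ) + t 1 * dhat 1 * (1 + θi)
      + (∑ m ∈ Finset.Icc 2 (i - 2), t m * dhat m * (1 + θ' m)) + w * (1 + θi')) :
    |chat - c| ≤ |α * (chatprev - cprev)|
      + (∑ m ∈ Finset.Icc 1 (i - 2), |t m * (dhat m - d m)|)
      + (((i : ℝ) + 1) * u / (1 - ((i : ℝ) + 1) * u))
          * (∑ m ∈ Finset.Icc 2 (i - 2), |t m * dhat m|)
      + ((i : ℝ) * u / (1 - (i : ℝ) * u)) * (|t 1 * dhat 1| + |w|)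
      + u * (|chat| + |α * chatprev|) := by
  set γi := (i : ℝ) * u / (1 - (i : ℝ) * u) with hγi
  set γ := ((i : ℝ) + 1) * u / (1 - ((i : ℝ) + 1) * u) with hγ
  have h12 : (1:ℕ) ≤ i - 2 := by omega
  have hIoc : Finset.Icc 2 (i-2) = Finset.Ioc 1 (i-2) := by
    rw [← Finset.Icc_add_one_left_eq_Ioc]; rfl
  have hA : ∀ f : ℕ → ℝ, ∑ m ∈ Finset.Icc 1 (i-2), f m
      = f 1 + ∑ m ∈ Finset.Icc 2 (i-2), f m := by
    intro f
    rw [Finset.Icc_eq_cons_Ioc h12, Finset.sum_cons, hIoc]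
  have hC : ∑ m ∈ Finset.Icc 2 (i-2), t m * dhat m * (1 + θ' m)
      = (∑ m ∈ Finset.Icc 2 (i-2), t m * dhat m)
        + ∑ m ∈ Finset.Icc 2 (i-2), t m * dhat m * θ' m := by
    rw [← Finset.sum_add_distrib]
    exact Finset.sum_congr rfl fun m _ => by ring
  have hE : ∑ m ∈ Finset.Icc 1 (i-2), t m * (dhat m - d m)
      = t 1 * (dhat 1 - d 1) + ((∑ m ∈ Finset.Icc 2 (i-2), t m * dhat m)
        - ∑ m ∈ Finset.Icc 2 (i-2), t m * d m) := by
    rw [hA, ← Finset.sum_sub_distrib]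
    congr 1
    exact Finset.sum_congr rfl fun m _ => by ring
  have key : chat - c = -(α*(chatprev - cprev))
      - (∑ m ∈ Finset.Icc 1 (i-2), t m*(dhat m - d m))
      - t 1*dhat 1*θi - (∑ m ∈ Finset.Icc 2 (i-2), t m*dhat m*θ' m)
      - w*θi' - ε*chat - α*chatprev*δ := by
    rw [hexact, hA (fun m => t m * d m), hE]
    linear_combination -hcomp - hC
  have habs : ∀ a b : ℝ, |a - b| ≤ |a| + |b| := by
    intro a b
    calc |a - b| = |a + -b| := by rw [sub_eq_add_neg]
    _ ≤ |a| + |-b| := abs_add_le _ _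
    _ = |a| + |b| := by rw [abs_neg]
  have step : |chat - c| ≤ |α*(chatprev - cprev)|
      + |∑ m ∈ Finset.Icc 1 (i-2), t m*(dhat m - d m)|
      + |t 1*dhat 1*θi| + |∑ m ∈ Finset.Icc 2 (i-2), t m*dhat m*θ' m|
      + |w*θi'| + |ε*chat| + |α*chatprev*δ| := by
    rw [key]
    exact (habs _ _).trans (add_le_add ((habs _ _).trans (add_le_add
      ((habs _ _).trans (add_le_add ((habs _ _).trans (add_le_add
      ((habs _ _).trans (add_le_add ((habs _ _).trans (add_le_add
      (le_of_eq (abs_neg _)) le_rfl)) le_rfl)) le_rfl)) le_rfl)) le_rfl)) le_rfl)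
  have hb1 : |∑ m ∈ Finset.Icc 1 (i-2), t m*(dhat m - d m)|
      ≤ ∑ m ∈ Finset.Icc 1 (i-2), |t m*(dhat m - d m)| :=
    Finset.abs_sum_le_sum_abs _ _
  have hb2 : |t 1*dhat 1*θi| ≤ |t 1*dhat 1| * γi := by
    rw [abs_mul]
    exact mul_le_mul_of_nonneg_left hθi (abs_nonneg _)
  have hb3 : |∑ m ∈ Finset.Icc 2 (i-2), t m*dhat m*θ' m|
      ≤ γ * ∑ m ∈ Finset.Icc 2 (i-2), |t m*dhat m| := by
    calc |∑ m ∈ Finset.Icc 2 (i-2), t m*dhat m*θ' m|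
        ≤ ∑ m ∈ Finset.Icc 2 (i-2), |t m*dhat m*θ' m| :=
          Finset.abs_sum_le_sum_abs _ _
      _ ≤ ∑ m ∈ Finset.Icc 2 (i-2), |t m*dhat m| * γ :=
          Finset.sum_le_sum fun m hm => by
            rw [abs_mul]
            exact mul_le_mul_of_nonneg_left (hθ' m hm) (abs_nonneg _)
      _ = γ * ∑ m ∈ Finset.Icc 2 (i-2), |t m*dhat m| := by
          rw [← Finset.sum_mul, mul_comm]
  have hb4 : |w*θi'| ≤ |w| * γi := by
    rw [abs_mul]
    exact mul_le_mul_of_nonneg_left hθi' (abs_nonneg _)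
  have hb5 : |ε*chat| ≤ u * |chat| := by
    rw [abs_mul]
    exact mul_le_mul_of_nonneg_right hε (abs_nonneg _)
  have hb6 : |α*chatprev*δ| ≤ u * |α*chatprev| := by
    rw [abs_mul]
    calc |α*chatprev| * |δ| ≤ |α*chatprev| * u :=
          mul_le_mul_of_nonneg_left hδ (abs_nonneg _)
      _ = u * |α*chatprev| := mul_comm _ _
  linarith [step, hb1, hb2, hb3, hb4, hb5, hb6]
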